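/- arXiv:2108.02375 — 7 statements merged into one kernel-verified Lean document; each statement's English description precedes it below -/
import Mathlib

section
/- Let Γ be an open convex symmetric cone in ℝ² with vertex at the origin satisfying Γ₂ ⊆ Γ ⊆ Γ₁, where Γ₁ = {(λ₁,λ₂) : λ₁+λ₂ > 0} and Γ₂ = {(λ₁,λ₂) : λ₁ > 0 and λ₂ > 0}. Then Γ = Γ_p for some 1 ≤ p ≤ 2, where Γ_p = {(λ₁,λ₂) : λ₂ > (p-2)λ₁ and λ₁ > (p-2)λ₂}. Conversely, every Γ_p with 1 ≤ p ≤ 2 is such a cone. -/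
def Gamma1 : Set (ℝ × ℝ) := {l | l.1 + l.2 > 0}

def Gamma2 : Set (ℝ × ℝ) := {l | l.1 > 0 ∧ l.2 > 0}

def GammaP (p : ℝ) : Set (ℝ × ℝ) := {l | l.2 > (p - 2) * l.1 ∧ l.1 > (p - 2) * l.2}

/-- An open convex symmetric cone in ℝ² with vertex at the origin, with Γ₂ ⊆ Γ ⊆ Γ₁. -/
def IsGoodCone (Γ : Set (ℝ × ℝ)) : Prop :=
  IsOpen Γ ∧ Convex ℝ Γ ∧ (∀ l ∈ Γ, (l.2, l.1) ∈ Γ) ∧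
  (∀ l ∈ Γ, ∀ t : ℝ, 0 < t → t • l ∈ Γ) ∧ Gamma2 ⊆ Γ ∧ Γ ⊆ Gamma1

theorem stmt0 (Γ : Set (ℝ × ℝ)) :
    IsGoodCone Γ ↔ ∃ p : ℝ, 1 ≤ p ∧ p ≤ 2 ∧ Γ = GammaP p := by
  constructor
  · rintro h
    obtain ⟨hopen, hconv, hsymm, hcone, h2, h1⟩ := h
    set S : Set ℝ := {t | ((1:ℝ), t) ∈ Γ} with hSdef
    have hScont : Continuous fun t : ℝ => ((1:ℝ), t) := by continuity
    have hSopen : IsOpen S := hopen.preimage hScont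
    -- upward closed
    have hSup : ∀ t ∈ S, ∀ u, t < u → u ∈ S := by
      intro t ht u htu
      rcases le_or_gt u t with h | h
      · linarith
      set N : ℝ := max u 0 + 1 with hN
      have hNu : u < N := by
        have := le_max_left u 0; simp only [hN]; linarith
      have hN0 : 0 < N := by
        have := le_max_right u 0; simp only [hN]; linarith
      have hNmem : ((1:ℝ), N) ∈ Γ := h2 ⟨one_pos, hN0⟩
      have htN : t < N := lt_trans htu hNu
      set a : ℝ := (N - u) / (N - t) with ha
      set b : ℝ := (u - t) / (N - t) with hb
      have hdpos : 0 < N - t := by linarith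
      have hne : N - t ≠ 0 := ne_of_gt hdpos
      have ha0 : 0 ≤ a := div_nonneg (by linarith) (by linarith)
      have hb0 : 0 ≤ b := div_nonneg (by linarith) (by linarith)
      have hab : a + b = 1 := by rw [ha, hb]; field_simp; ring
      have := hconv ht hNmem ha0 hb0 hab
      have heq : a • ((1:ℝ), t) + b • ((1:ℝ), N) = ((1:ℝ), u) := by
        simp only [Prod.smul_mk, smul_eq_mul, Prod.mk_add_mk, Prod.mk.injEq]
        constructor
        · rw [mul_one, mul_one]; exact hab
        · rw [ha, hb]; field_simp; ring
      rwa [heq] at this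
    have hSne : S.Nonempty := ⟨1, h2 ⟨one_pos, one_pos⟩⟩
    have hbdd : BddBelow S := by
      refine ⟨-1, fun t ht => ?_⟩
      have := h1 ht
      simp only [Gamma1, Set.mem_setOf_eq] at this
      linarith
    set c : ℝ := sInf S with hc
    have hcnotmem : c ∉ S := by
      intro hmem
      obtain ⟨ε, hε, hball⟩ := Metric.isOpen_iff.mp hSopen c hmem
      have : c - ε / 2 ∈ S := hball (by
        rw [Metric.mem_ball, Real.dist_eq, abs_of_nonpos (by linarith)]; linarith)
      have := csInf_le hbdd this
      linarith
    have hmemS : ∀ t, t ∈ S ↔ c < t := by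
      intro t
      constructor
      · intro ht
        rcases lt_or_eq_of_le (csInf_le hbdd ht) with h | h
        · exact h
        · exact absurd (by rwa [← h] at ht) hcnotmem
      · intro ht
        obtain ⟨s, hs, hst⟩ := exists_lt_of_csInf_lt hSne ht
        exact hSup s hs t hst
    have hc0 : c ≤ 0 := by
      by_contra h
      push_neg at h
      have : c / 2 ∈ S := h2 ⟨one_pos, by linarith⟩
      have := (hmemS _).mp this
      linarith
    have hc1 : -1 ≤ c := le_csInf hSne (fun t ht => by
      have := h1 ht
      simp only [Gamma1, Set.mem_setOf_eq] at this
      linarith)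
    refine ⟨c + 2, by linarith, by linarith, ?_⟩
    ext ⟨x, y⟩
    simp only [GammaP, Set.mem_setOf_eq, add_sub_cancel_right]
    constructor
    · intro hxy
      have hsum : 0 < x + y := h1 hxy
      have hyx : (y, x) ∈ Γ := hsymm _ hxy
      have key : ∀ u v : ℝ, (u, v) ∈ Γ → 0 < u → c * u < v := by
        intro u v huv hu
        have := hcone _ huv (1/u) (by positivity)
        simp only [Prod.smul_mk, smul_eq_mul] at this
        have h1u : (1/u) * u = 1 := by field_simp
        rw [h1u] at this
        have : c < (1/u) * v := (hmemS _).mp this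
        calc c * u < ((1/u) * v) * u := by exact mul_lt_mul_of_pos_right this hu
        _ = v := by field_simp
      constructor
      · rcases le_or_gt x 0 with hx | hx
        · nlinarith
        · exact key x y hxy hx
      · rcases le_or_gt y 0 with hy | hy
        · nlinarith
        · exact key y x hyx hy
    · rintro ⟨hA, hB⟩
      rcases le_or_gt x 0 with hx | hx
      · -- x ≤ 0 forces y > 0
        have hy : 0 < y := by nlinarith
        have : x / y ∈ S := (hmemS _).mpr (by rwa [lt_div_iff₀ hy])
        have := hcone _ this y hy
        simp only [Prod.smul_mk, smul_eq_mul] at this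
        have heq : y * (x / y) = x := by field_simp
        rw [mul_one, heq] at this
        exact hsymm _ this
      · rcases le_or_gt y 0 with hy | hy
        · have : y / x ∈ S := (hmemS _).mpr (by rwa [lt_div_iff₀ hx])
          have := hcone _ this x hx
          simp only [Prod.smul_mk, smul_eq_mul] at this
          have heq : x * (y / x) = y := by field_simp
          rwa [mul_one, heq] at this
        · exact h2 ⟨hx, hy⟩
  · rintro ⟨p, hp1, hp2, rfl⟩
    set c : ℝ := p - 2 with hc
    have hc0 : c ≤ 0 := by rw [hc]; linarith
    have hc1 : -1 ≤ c := by rw [hc]; linarith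
    refine ⟨?_, ?_, ?_, ?_, ?_, ?_⟩
    · have : GammaP p = {l : ℝ × ℝ | c * l.1 < l.2} ∩ {l : ℝ × ℝ | c * l.2 < l.1} := by
        ext l; simp [GammaP, hc]
      rw [this]
      exact (isOpen_lt (by continuity) continuous_snd).inter
        (isOpen_lt (by continuity) continuous_fst)
    · rintro ⟨x1, y1⟩ hl1 ⟨x2, y2⟩ hl2 a b ha hb hab
      simp only [GammaP, Set.mem_setOf_eq] at *
      obtain ⟨hA, hB⟩ := hl1
      obtain ⟨hC, hD⟩ := hl2
      constructor
      · rcases ha.eq_or_lt with h | h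
        · subst h; simp at hab; subst hab; simpa using hC
        · have := mul_pos h (by linarith : (0:ℝ) < y1 - (p-2) * x1)
          have := mul_nonneg hb (by linarith : (0:ℝ) ≤ y2 - (p-2) * x2)
          simp [Prod.smul_def, smul_eq_mul]
          nlinarith
      · rcases ha.eq_or_lt with h | h
        · subst h; simp at hab; subst hab; simpa using hD
        · have := mul_pos h (by linarith : (0:ℝ) < x1 - (p-2) * y1)
          have := mul_nonneg hb (by linarith : (0:ℝ) ≤ x2 - (p-2) * y2)
          simp [Prod.smul_def, smul_eq_mul]
          nlinarith
    · rintro ⟨x, y⟩ h; simp only [GammaP, Set.mem_setOf_eq] at *; exact ⟨h.2, h.1⟩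
    · rintro ⟨x, y⟩ h t ht
      simp only [GammaP, Set.mem_setOf_eq, Prod.smul_mk, smul_eq_mul] at *
      constructor <;> nlinarith [h.1, h.2]
    · rintro ⟨x, y⟩ ⟨hx, hy⟩
      simp only [GammaP, Set.mem_setOf_eq]
      constructor <;> nlinarith
    · rintro ⟨x, y⟩ ⟨hx, hy⟩
      simp only [Gamma1, Set.mem_setOf_eq] at *
      nlinarith
end

section
/- Let a > 0 and g : [-4a, 4a] → ℝ be continuously differentiable, and assume that for all τ with |τ| < 2a, all s with |s| ≤ 4a, and all λ with 0 < λ < a and λ < |s - τ|, one has g(τ + λ²(s-τ)/|s-τ|²) - 4·ln(|s-τ|/λ) ≤ g(s). Then |g'(s)| ≤ 2/a for all s with |s| ≤ a. -/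
open Real Set Filter Topology

lemma aux_nonneg {F : ℝ → ℝ} {d ε : ℝ} (hF : HasDerivAt F d 0) (hε : 0 < ε)
    (h0 : F 0 = 0) (hpos : ∀ x : ℝ, 0 < x → x < ε → 0 ≤ F x) : 0 ≤ d := by
  have h1 : Tendsto (slope F 0) (𝓝[≠] 0) (𝓝 d) := hasDerivAt_iff_tendsto_slope.mp hF
  have h2 : Tendsto (slope F 0) (𝓝[>] (0:ℝ)) (𝓝 d) :=
    h1.mono_left (nhdsWithin_mono _ (fun x hx => ne_of_gt hx))
  refine ge_of_tendsto h2 ?_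
  filter_upwards [Ioo_mem_nhdsGT_of_mem (show (0:ℝ) ∈ Ico 0 ε from ⟨le_refl _, hε⟩)] with x hx
  have hFx := hpos x hx.1 hx.2
  have : slope F 0 x = F x / x := by
    simp [slope_def_field, h0]
  rw [this]
  exact div_nonneg hFx hx.1.le

lemma key_bound (a : ℝ) (ha : 0 < a) (g : ℝ → ℝ)
    (hg : ContDiffOn ℝ 1 g (Set.Icc (-(4 * a)) (4 * a)))
    (h : ∀ τ s lam : ℝ, |τ| < 2 * a → |s| ≤ 4 * a → 0 < lam → lam < a → lam < |s - τ| →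
      g (τ + lam ^ 2 * (s - τ) / |s - τ| ^ 2) - 4 * Real.log (|s - τ| / lam) ≤ g s)
    (s σ lam : ℝ) (hs : |s| ≤ a) (hσ : |σ| = 1)
    (hl1 : 0 < lam) (hl2 : lam < a) :
    -(2 / lam) ≤ σ * deriv g s := by
  -- differentiability of g at s
  have hs4 : s ∈ Set.Ioo (-(4 * a)) (4 * a) := by
    rw [Set.mem_Ioo]
    rcases abs_le.mp hs with ⟨h1, h2⟩
    constructor <;> nlinarith
  have hnbd : Set.Icc (-(4 * a)) (4 * a) ∈ 𝓝 s :=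
    mem_nhds_iff.mpr ⟨Set.Ioo (-(4 * a)) (4 * a), Set.Ioo_subset_Icc_self, isOpen_Ioo, hs4⟩
  have hdiff : DifferentiableAt ℝ g s :=
    ((hg.differentiableOn one_ne_zero).differentiableAt hnbd)
  set d := deriv g s with hd
  have hgd : HasDerivAt g d s := hdiff.hasDerivAt
  set F : ℝ → ℝ := fun x => g (s + σ * x) - g (s - σ * (lam * x / (lam + x))) +
      4 * Real.log ((lam + x) / lam) with hF
  -- derivative of F at 0
  have hlne : lam + (0:ℝ) ≠ 0 := by simpa using hl1.ne'
  have h1 : HasDerivAt (fun x : ℝ => g (s + σ * x)) (d * σ) 0 := by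
    have u : HasDerivAt (fun x : ℝ => s + σ * x) σ 0 := by
      simpa using ((hasDerivAt_id (0:ℝ)).const_mul σ).const_add s
    have hgd' : HasDerivAt g d (s + σ * 0) := by simpa using hgd
    exact hgd'.comp 0 u
  have hq : HasDerivAt (fun x : ℝ => lam * x / (lam + x)) 1 0 := by
    have num : HasDerivAt (fun x : ℝ => lam * x) lam 0 := by
      simpa using (hasDerivAt_id (0:ℝ)).const_mul lam
    have den : HasDerivAt (fun x : ℝ => lam + x) 1 0 := by
      simpa using (hasDerivAt_id (0:ℝ)).const_add lam
    have := num.div den hlne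
    refine this.congr_deriv ?_
    field_simp
    ring
  have h2 : HasDerivAt (fun x : ℝ => g (s - σ * (lam * x / (lam + x)))) (d * (-σ)) 0 := by
    have v : HasDerivAt (fun x : ℝ => s - σ * (lam * x / (lam + x))) (-σ) 0 := by
      simpa [sub_eq_add_neg] using ((hq.const_mul σ).neg).const_add s
    have hgd' : HasDerivAt g d (s - σ * (lam * 0 / (lam + 0))) := by simpa using hgd
    exact hgd'.comp 0 v
  have h3 : HasDerivAt (fun x : ℝ => 4 * Real.log ((lam + x) / lam)) (4 * (1 / lam)) 0 := by
    have w : HasDerivAt (fun x : ℝ => (lam + x) / lam) (1 / lam) 0 := by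
      simpa using ((hasDerivAt_id (0:ℝ)).const_add lam).div_const lam
    have hne : (lam + (0:ℝ)) / lam ≠ 0 := by
      simp [hl1.ne']
    have := (w.log hne).const_mul 4
    refine this.congr_deriv ?_
    field_simp
    ring
  have hFd : HasDerivAt F (2 * (σ * d) + 4 / lam) 0 := by
    have := (h1.sub h2).add h3
    refine this.congr_deriv ?_
    ring
  have hF0 : F 0 = 0 := by
    simp [hF, hl1.ne']
  have hFpos : ∀ x : ℝ, 0 < x → x < a → 0 ≤ F x := by
    intro x hx hxa
    have hsum : 0 < lam + x := by linarith
    have habs : |(s + σ * x) - (s - σ * lam)| = lam + x := by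
      have : (s + σ * x) - (s - σ * lam) = σ * (lam + x) := by ring
      rw [this, abs_mul, hσ, one_mul, abs_of_pos hsum]
    have hτ : |s - σ * lam| < 2 * a := by
      calc |s - σ * lam| ≤ |s| + |σ * lam| := abs_sub _ _
        _ = |s| + lam := by rw [abs_mul, hσ, one_mul, abs_of_pos hl1]
        _ < 2 * a := by linarith
    have hS : |s + σ * x| ≤ 4 * a := by
      calc |s + σ * x| ≤ |s| + |σ * x| := abs_add_le _ _
        _ = |s| + x := by rw [abs_mul, hσ, one_mul, abs_of_pos hx]
        _ ≤ 4 * a := by linarith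
    have hlt : lam < |(s + σ * x) - (s - σ * lam)| := by rw [habs]; linarith
    have hineq := h (s - σ * lam) (s + σ * x) lam hτ hS hl1 hl2 hlt
    rw [habs] at hineq
    have hpt : (s - σ * lam) + lam ^ 2 * ((s + σ * x) - (s - σ * lam)) / (lam + x) ^ 2
        = s - σ * (lam * x / (lam + x)) := by
      field_simp
      ring
    rw [hpt] at hineq
    simp only [hF]
    linarith
  have h0 := aux_nonneg hFd ha hF0 hFpos
  have h4 : 4 / lam = 2 * (2 / lam) := by ring
  nlinarith [h0]

theorem stmt1 (a : ℝ) (ha : 0 < a) (g : ℝ → ℝ)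
    (hg : ContDiffOn ℝ 1 g (Set.Icc (-(4 * a)) (4 * a)))
    (h : ∀ τ s lam : ℝ, |τ| < 2 * a → |s| ≤ 4 * a → 0 < lam → lam < a → lam < |s - τ| →
      g (τ + lam ^ 2 * (s - τ) / |s - τ| ^ 2) - 4 * Real.log (|s - τ| / lam) ≤ g s) :
    ∀ s : ℝ, |s| ≤ a → |deriv g s| ≤ 2 / a := by
  intro s hs
  have hbound : ∀ lam : ℝ, 0 < lam → lam < a → |deriv g s| ≤ 2 / lam := by
    intro lam hl1 hl2
    have k1 := key_bound a ha g hg h s 1 lam hs (by norm_num) hl1 hl2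
    have k2 := key_bound a ha g hg h s (-1) lam hs (by norm_num) hl1 hl2
    rw [abs_le]
    constructor <;> [linarith; linarith]
  -- take lam → a from the left
  have hne : NeBot (𝓝[<] a) := nhdsLT_neBot a
  have ht : Tendsto (fun l : ℝ => 2 / l) (𝓝[<] a) (𝓝 (2 / a)) := by
    have : Tendsto (fun l : ℝ => 2 / l) (𝓝 a) (𝓝 (2 / a)) :=
      (tendsto_const_nhds.div tendsto_id ha.ne')
    exact this.mono_left nhdsWithin_le_nhds
  refine ge_of_tendsto ht ?_
  filter_upwards [Ioo_mem_nhdsLT_of_mem (show a ∈ Set.Ioc 0 a from ⟨ha, le_refl _⟩)] with l hl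
  exact hbound l hl.1 hl.2
end

section
/- Let a > 0 and let u : B(0,8a) → ℝ be C¹ on the open ball B(0,8a) ⊂ ℝ². Assume that for all x ∈ B(0,4a), y ∈ B(0,8a), and λ with 0 < λ < 2a and λ < |y - x|, one has u(x + λ²(y-x)/|y-x|²) - 4·ln(|y-x|/λ) ≤ u(y). Then |∇u(x)| ≤ 2/a for all x with |x| < a. -/
theorem stmt2 (a : ℝ) (ha : 0 < a) (u : EuclideanSpace ℝ (Fin 2) → ℝ)
    (hu : ContDiffOn ℝ 1 u (Metric.ball 0 (8 * a)))
    (h : ∀ x y : EuclideanSpace ℝ (Fin 2), ∀ lam : ℝ,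
      x ∈ Metric.ball (0 : EuclideanSpace ℝ (Fin 2)) (4 * a) →
      y ∈ Metric.ball (0 : EuclideanSpace ℝ (Fin 2)) (8 * a) →
      0 < lam → lam < 2 * a → lam < ‖y - x‖ →
      u (x + (lam ^ 2 / ‖y - x‖ ^ 2) • (y - x)) - 4 * Real.log (‖y - x‖ / lam) ≤ u y) :
    ∀ x : EuclideanSpace ℝ (Fin 2), ‖x‖ < a → ‖fderiv ℝ u x‖ ≤ 2 / a := by
  intro y hy
  have ha' : (a : ℝ) ≠ 0 := ne_of_gt ha
  have hy8 : y ∈ Metric.ball (0 : EuclideanSpace ℝ (Fin 2)) (8 * a) := by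
    rw [Metric.mem_ball, dist_zero_right]; nlinarith
  have hdiff : HasFDerivAt u (fderiv ℝ u y) y :=
    ((hu.differentiableOn one_ne_zero).differentiableAt
      (Metric.isOpen_ball.mem_nhds hy8)).hasFDerivAt
  set L := fderiv ℝ u y with hLdef
  have key : ∀ w : EuclideanSpace ℝ (Fin 2), ‖w‖ = 1 → -(2 / a) ≤ L w := by
    intro w hw
    set x := y - a • w with hx
    have hyx : y - x = a • w := by rw [hx]; abel
    have hnyx : ‖y - x‖ = a := by
      rw [hyx, norm_smul, hw, Real.norm_eq_abs, abs_of_pos ha, mul_one]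
    set φ : ℝ → ℝ := fun l => u (x + (l ^ 2 / a) • w) - 4 * (Real.log a - Real.log l)
      with hφdef
    have hca : x + (a ^ 2 / a) • w = y := by
      rw [hx, sq, mul_div_assoc, div_self ha', mul_one]; abel
    have hφa : φ a = u y := by simp [hφdef, hca]
    have hc : HasDerivAt (fun l : ℝ => x + (l ^ 2 / a) • w) ((2 : ℝ) • w) a := by
      have h1 : HasDerivAt (fun l : ℝ => l ^ 2 / a) (2 * a / a) a := by
        simpa using (hasDerivAt_pow 2 a).div_const a
      have h2 : 2 * a / a = 2 := by field_simp
      rw [h2] at h1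
      exact (h1.smul_const w).const_add x
    have hdiff' : HasFDerivAt u L (x + (a ^ 2 / a) • w) := hca ▸ hdiff
    have hcomp : HasDerivAt (fun l : ℝ => u (x + (l ^ 2 / a) • w)) (L ((2 : ℝ) • w)) a :=
      hdiff'.comp_hasDerivAt a hc
    have hlog : HasDerivAt (fun l : ℝ => 4 * (Real.log a - Real.log l)) (4 * (0 - a⁻¹)) a :=
      ((hasDerivAt_const a (Real.log a)).sub (Real.hasDerivAt_log ha')).const_mul 4
    have hφ' : HasDerivAt φ (L ((2 : ℝ) • w) - 4 * (0 - a⁻¹)) a := hcomp.sub hlog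
    have hineq : ∀ l ∈ Set.Ioo (0 : ℝ) a, φ l ≤ u y := by
      intro l hl
      have hx4 : x ∈ Metric.ball (0 : EuclideanSpace ℝ (Fin 2)) (4 * a) := by
        rw [Metric.mem_ball, dist_zero_right, hx]
        calc ‖y - a • w‖ ≤ ‖y‖ + ‖a • w‖ := norm_sub_le _ _
          _ = ‖y‖ + a := by rw [norm_smul, hw, Real.norm_eq_abs, abs_of_pos ha, mul_one]
          _ < 4 * a := by linarith
      have := h x y l hx4 hy8 hl.1 (by linarith [hl.2]) (by rw [hnyx]; exact hl.2)
      have hpt : x + (l ^ 2 / ‖y - x‖ ^ 2) • (y - x) = x + (l ^ 2 / a) • w := by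
        rw [hnyx, hyx, smul_smul]
        congr 2
        field_simp
      have hlog' : Real.log (‖y - x‖ / l) = Real.log a - Real.log l := by
        rw [hnyx, Real.log_div ha' (ne_of_gt hl.1)]
      rw [hpt, hlog'] at this
      exact this
    have hW := (hφ'.hasDerivWithinAt (s := Set.Iio a))
    rw [hasDerivWithinAt_iff_tendsto_slope] at hW
    have hsd : Set.Iio a \ {a} = Set.Iio a := by simp
    rw [hsd] at hW
    have hev : ∀ᶠ l in nhdsWithin a (Set.Iio a), 0 ≤ slope φ a l := by
      filter_upwards [self_mem_nhdsWithin,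
        (eventually_gt_nhds ha).filter_mono nhdsWithin_le_nhds] with l hl1 hl2
      have hφl : φ l ≤ φ a := by rw [hφa]; exact hineq l ⟨hl2, hl1⟩
      have hsl : slope φ a l = (φ l - φ a) / (l - a) := by
        rw [slope_def_field]
      rw [hsl]
      exact div_nonneg_iff.mpr (Or.inr ⟨by linarith, by linarith [Set.mem_Iio.mp hl1]⟩)
    have hd : 0 ≤ L ((2 : ℝ) • w) - 4 * (0 - a⁻¹) := ge_of_tendsto hW hev
    have hL2 : L ((2 : ℝ) • w) = 2 * L w := by rw [map_smul, smul_eq_mul]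
    rw [hL2] at hd
    have : 2 / a = 2 * a⁻¹ := by ring
    rw [this]
    linarith
  have key2 : ∀ w : EuclideanSpace ℝ (Fin 2), ‖w‖ = 1 → |L w| ≤ 2 / a := by
    intro w hw
    have h1 := key w hw
    have h2 := key (-w) (by simpa using hw)
    rw [map_neg] at h2
    rw [abs_le]; constructor <;> linarith
  refine ContinuousLinearMap.opNorm_le_bound _ (by positivity) ?_
  intro z
  by_cases hz : z = 0
  · simp [hz]
  · have hz' : ‖z‖ ≠ 0 := norm_ne_zero_iff.mpr hz
    have hwn : ‖(‖z‖⁻¹ • z)‖ = 1 := by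
      rw [norm_smul, Real.norm_eq_abs, abs_inv, abs_norm, inv_mul_cancel₀ hz']
    have hk := key2 _ hwn
    rw [map_smul, smul_eq_mul, abs_mul, abs_inv, abs_norm] at hk
    rw [Real.norm_eq_abs]
    calc |L z| = ‖z‖ * (‖z‖⁻¹ * |L z|) := by field_simp
      _ ≤ ‖z‖ * (2 / a) := mul_le_mul_of_nonneg_left hk (norm_nonneg z)
      _ = 2 / a * ‖z‖ := mul_comm _ _
end

section
/- Let u ∈ C¹(ℝ²) satisfy u(x + λ²(y-x)/|y-x|²) - 4·ln(|y-x|/λ) ≤ u(y) for all λ > 0, x ∈ ℝ², and y with |y - x| ≥ λ. Then u is constant. -/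
theorem stmt3 (u : EuclideanSpace ℝ (Fin 2) → ℝ) (hu : ContDiff ℝ 1 u)
    (h : ∀ lam : ℝ, ∀ x y : EuclideanSpace ℝ (Fin 2), 0 < lam → lam ≤ ‖y - x‖ →
      u (x + (lam ^ 2 / ‖y - x‖ ^ 2) • (y - x)) - 4 * Real.log (‖y - x‖ / lam) ≤ u y) :
    ∀ x y : EuclideanSpace ℝ (Fin 2), u x = u y := by
  have key : ∀ x y : EuclideanSpace ℝ (Fin 2), u x ≤ u y := by
    intro x y
    rcases eq_or_ne y x with rfl | hne
    · exact le_refl _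
    have hd : 0 < ‖y - x‖ := norm_sub_pos_iff.mpr hne
    apply le_of_forall_pos_le_add
    intro ε hε
    set t : ℝ := 2 / ε with ht_def
    have ht : 0 < t := by positivity
    have ht1 : 0 < 1 + t := by linarith
    set lam : ℝ := Real.sqrt (t * (1 + t)) * ‖y - x‖ with hlam_def
    have hlam : 0 < lam := by
      apply mul_pos _ hd
      exact Real.sqrt_pos.mpr (by positivity)
    set X : EuclideanSpace ℝ (Fin 2) := x - t • (y - x) with hX_def
    have hYX : y - X = (1 + t) • (y - x) := by
      rw [hX_def]
      module
    have hnYX : ‖y - X‖ = (1 + t) * ‖y - x‖ := by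
      rw [hYX, norm_smul, Real.norm_eq_abs, abs_of_pos ht1]
    have hsq : Real.sqrt (t * (1 + t)) ≤ 1 + t := by
      have h' : Real.sqrt (t * (1 + t)) ≤ Real.sqrt ((1 + t) ^ 2) :=
        Real.sqrt_le_sqrt (by nlinarith)
      rwa [Real.sqrt_sq ht1.le] at h'
    have hle : lam ≤ ‖y - X‖ := by
      rw [hnYX, hlam_def]
      exact mul_le_mul_of_nonneg_right hsq hd.le
    have hkey := h lam X y hlam hle
    -- simplify the argument of u
    have hsqsq : Real.sqrt (t * (1 + t)) ^ 2 = t * (1 + t) := Real.sq_sqrt (by positivity)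
    have harg : X + (lam ^ 2 / ‖y - X‖ ^ 2) • (y - X) = x := by
      rw [hnYX, hYX, hlam_def]
      have hc : (Real.sqrt (t * (1 + t)) * ‖y - x‖) ^ 2 / ((1 + t) * ‖y - x‖) ^ 2
          = t / (1 + t) := by
        rw [mul_pow, mul_pow, hsqsq]
        field_simp
      rw [hc, hX_def, smul_smul]
      have : t / (1 + t) * (1 + t) = t := by field_simp
      rw [this]
      module
    -- simplify the log term
    have hlog : ‖y - X‖ / lam = Real.sqrt ((1 + t) / t) := by
      rw [hnYX, hlam_def]
      rw [mul_div_mul_right _ _ hd.ne']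
      rw [show (1 + t) = Real.sqrt ((1 + t) ^ 2) by rw [Real.sqrt_sq ht1.le]]
      rw [← Real.sqrt_div' _ (by positivity)]
      congr 1
      field_simp
      ring
      exact (Real.sq_sqrt (by nlinarith)).symm
    have hlogle : 4 * Real.log (‖y - X‖ / lam) ≤ ε := by
      rw [hlog, Real.log_sqrt (by positivity)]
      have h1 : Real.log ((1 + t) / t) ≤ (1 + t) / t - 1 :=
        Real.log_le_sub_one_of_pos (by positivity)
      have h2 : (1 + t) / t - 1 = 1 / t := by field_simp; ring
      have h3 : 1 / t = ε / 2 := by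
        rw [ht_def]
        field_simp
      rw [h2, h3] at h1
      linarith
    rw [harg] at hkey
    linarith
  exact fun x y => le_antisymm (key x y) (key y x)
end

section
/- Let 1 < p ≤ 2 and C₁ > 0, C₂ ∈ ℝ. The radially symmetric function u(r) = -(4/(p-1))·ln(r^{p-1} + C₁) + C₂ on ℝ² \ {0} satisfies λ(A^u) ∈ ∂Γ_p, where λ₂(A^u) > 0 and λ₁(A^u) + (2-p)λ₂(A^u) = 0 at every point. -/
/-- First eigenvalue of A^u for a radially symmetric function u(r). -/
noncomputable def lam1 (u : ℝ → ℝ) (r : ℝ) : ℝ :=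
  (1 / (4 * Real.exp (u r))) * ((deriv u r) ^ 2 - 4 * deriv (deriv u) r)

/-- Second eigenvalue of A^u for a radially symmetric function u(r). -/
noncomputable def lam2 (u : ℝ → ℝ) (r : ℝ) : ℝ :=
  -(1 / (4 * Real.exp (u r) * r)) * (deriv u r) * (4 + r * deriv u r)

lemma gammaP_open (p : ℝ) : IsOpen (GammaP p) := by
  have : GammaP p = {l : ℝ × ℝ | (p - 2) * l.1 < l.2} ∩ {l : ℝ × ℝ | (p - 2) * l.2 < l.1} := by
    ext l; simp [GammaP, and_comm]
  rw [this]
  exact (isOpen_lt (by fun_prop) continuous_snd).inter (isOpen_lt (by fun_prop) continuous_fst)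

lemma mem_frontier_gammaP (p : ℝ) (hp1 : 1 < p) (hp2 : p ≤ 2) (a b : ℝ) (hb : 0 < b)
    (hab : a = (p - 2) * b) : (a, b) ∈ frontier (GammaP p) := by
  have hsq : (p - 2) ^ 2 < 1 := by nlinarith
  constructor
  · -- closure
    have ht : Filter.Tendsto (fun t : ℝ => (t, b)) (nhdsWithin a (Set.Ioi a)) (nhds (a, b)) :=
      (Filter.tendsto_id.mono_left nhdsWithin_le_nhds).prodMk_nhds tendsto_const_nhds
    apply mem_closure_of_tendsto ht
    have h1 : ∀ᶠ t in nhds a, t ∈ {t : ℝ | (p - 2) * t < b} :=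
      (isOpen_lt (by fun_prop) continuous_const).eventually_mem (by simp; nlinarith)
    filter_upwards [eventually_mem_nhdsWithin, nhdsWithin_le_nhds h1] with t ht1 ht2
    exact ⟨ht2, by simpa [hab] using ht1⟩
  · rw [(gammaP_open p).interior_eq]
    intro h
    have := h.2
    simp only [GammaP, Set.mem_setOf_eq] at this
    nlinarith

theorem stmt6 (p C₁ C₂ : ℝ) (hp1 : 1 < p) (hp2 : p ≤ 2) (hC : 0 < C₁)
    (u : ℝ → ℝ) (hu : ∀ r : ℝ, u r = -(4 / (p - 1)) * Real.log (r ^ (p - 1) + C₁) + C₂) :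
    ∀ r : ℝ, 0 < r →
      0 < lam2 u r ∧ lam1 u r + (2 - p) * lam2 u r = 0 ∧
      (lam1 u r, lam2 u r) ∈ frontier (GammaP p) := by
  have hpne : p - 1 ≠ 0 := by linarith
  -- derivative of u at any x > 0
  have hu' : ∀ x : ℝ, 0 < x →
      HasDerivAt u (-4 * x ^ (p - 2) / (x ^ (p - 1) + C₁)) x := by
    intro x hx
    have hS : 0 < x ^ (p - 1) + C₁ := add_pos (Real.rpow_pos_of_pos hx _) hC
    have h1 : HasDerivAt (fun y : ℝ => y ^ (p - 1) + C₁) ((p - 1) * x ^ (p - 1 - 1)) x :=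
      (Real.hasDerivAt_rpow_const (Or.inl hx.ne')).add_const C₁
    have h2 := ((h1.log hS.ne').const_mul (-(4 / (p - 1)))).add_const C₂
    have hequ : u = fun y => -(4 / (p - 1)) * Real.log (y ^ (p - 1) + C₁) + C₂ := funext hu
    rw [hequ]
    refine h2.congr_deriv ?_
    have : p - 1 - 1 = p - 2 := by ring
    rw [this]
    field_simp
  intro r hr
  have hS : 0 < r ^ (p - 1) + C₁ := add_pos (Real.rpow_pos_of_pos hr _) hC
  have hd1 : deriv u r = -4 * r ^ (p - 2) / (r ^ (p - 1) + C₁) := (hu' r hr).deriv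
  -- second derivative
  have heq : deriv u =ᶠ[nhds r] fun x => -4 * x ^ (p - 2) / (x ^ (p - 1) + C₁) := by
    filter_upwards [eventually_gt_nhds hr] with x hx using (hu' x hx).deriv
  have hnum : HasDerivAt (fun x : ℝ => -4 * x ^ (p - 2)) (-4 * ((p - 2) * r ^ (p - 2 - 1))) r :=
    (Real.hasDerivAt_rpow_const (Or.inl hr.ne')).const_mul (-4)
  have hden : HasDerivAt (fun x : ℝ => x ^ (p - 1) + C₁) ((p - 1) * r ^ (p - 1 - 1)) r :=
    (Real.hasDerivAt_rpow_const (Or.inl hr.ne')).add_const C₁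
  have hd2 : deriv (deriv u) r =
      ((-4 * ((p - 2) * r ^ (p - 2 - 1))) * (r ^ (p - 1) + C₁)
        - (-4 * r ^ (p - 2)) * ((p - 1) * r ^ (p - 1 - 1))) / (r ^ (p - 1) + C₁) ^ 2 := by
    rw [heq.deriv_eq]
    exact (hnum.div hden hS.ne').deriv
  -- rewrite exponents in terms of A := r ^ (p - 3)
  have e32 : r ^ (p - 2) = r ^ (p - 3) * r := by
    rw [← Real.rpow_add_one hr.ne' (p - 3)]; ring_nf
  have e31 : r ^ (p - 1) = r ^ (p - 3) * r * r := by
    rw [← Real.rpow_add_one hr.ne' (p - 3), ← Real.rpow_add_one hr.ne']; ring_nf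
  have e21 : p - 1 - 1 = p - 2 := by ring
  have e22 : p - 2 - 1 = p - 3 := by ring
  set A := r ^ (p - 3) with hA
  have hApos : 0 < A := Real.rpow_pos_of_pos hr _
  set E := Real.exp (u r) with hE
  have hEpos : 0 < E := Real.exp_pos _
  set S := r ^ (p - 1) + C₁ with hSdef
  have hSval : S = A * r * r + C₁ := by rw [hSdef, e31]
  rw [e32] at hd1
  rw [e21, e22, e32] at hd2
  have hC1 : C₁ = S - A * r * r := by rw [hSval]; ring
  have hSne := hS.ne'
  have hlam2 : lam2 u r = 4 * A * C₁ / (E * S ^ 2) := by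
    simp only [lam2, hd1, ← hE, hC1]
    field_simp
    ring
  have hlam1 : lam1 u r = (p - 2) * (4 * A * C₁ / (E * S ^ 2)) := by
    simp only [lam1, hd1, hd2, ← hE, hC1]
    field_simp
    ring
  refine ⟨?_, ?_, ?_⟩
  · rw [hlam2]; positivity
  · rw [hlam1, hlam2]; ring
  · exact mem_frontier_gammaP p hp1 hp2 _ _ (by rw [hlam2]; positivity)
      (by rw [hlam1, hlam2])
end

section
/- Let u : (a,b) → ℝ be a C² radially symmetric function on the annulus {a < |x| < b} ⊂ ℝ² with λ(A^u) ∈ closure(Γ₂) at every point, where Γ₂ = {λ₁ > 0, λ₂ > 0}. Then u'(r) ≤ 0 and (u(r) + 4·ln r)' ≥ 0 for all r ∈ (a,b); in particular, for a < c < d < b, 0 ≤ u(c) - u(d) ≤ 4(ln d - ln c). -/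
theorem stmt8 (a b : ℝ) (ha : 0 ≤ a) (hab : a < b) (u : ℝ → ℝ)
    (hu : ContDiffOn ℝ 2 u (Set.Ioo a b))
    (h : ∀ r ∈ Set.Ioo a b, 0 ≤ lam1 u r ∧ 0 ≤ lam2 u r) :
    (∀ r ∈ Set.Ioo a b, deriv u r ≤ 0 ∧ 0 ≤ deriv (fun s => u s + 4 * Real.log s) r) ∧
    ∀ c d : ℝ, a < c → c < d → d < b →
      0 ≤ u c - u d ∧ u c - u d ≤ 4 * (Real.log d - Real.log c) := by
  have hdiff : ∀ r ∈ Set.Ioo a b, DifferentiableAt ℝ u r := fun r hr =>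
    (hu.contDiffAt ((isOpen_Ioo).mem_nhds hr)).differentiableAt (by norm_num)
  have key : ∀ r ∈ Set.Ioo a b, deriv u r ≤ 0 ∧ 0 ≤ 4 + r * deriv u r := by
    intro r hr
    have hr0 : 0 < r := lt_of_le_of_lt ha hr.1
    have h2 := (h r hr).2
    have hE : 0 < Real.exp (u r) := Real.exp_pos _
    have hc : 0 < 1 / (4 * Real.exp (u r) * r) := by positivity
    rw [lam2] at h2
    have hP : deriv u r * (4 + r * deriv u r) ≤ 0 := by
      by_contra hP
      push_neg at hP
      nlinarith [mul_pos hc hP]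
    constructor
    · by_contra h'
      push_neg at h'
      have h4 : 0 < 4 + r * deriv u r := by nlinarith
      nlinarith [mul_pos h' h4]
    · by_contra h'
      push_neg at h'
      have h4 : deriv u r < 0 := by nlinarith
      nlinarith [mul_pos_of_neg_of_neg h4 h']
  have hderivg : ∀ r ∈ Set.Ioo a b,
      deriv (fun s => u s + 4 * Real.log s) r = deriv u r + 4 * r⁻¹ := by
    intro r hr
    have hr0 : 0 < r := lt_of_le_of_lt ha hr.1
    have h1 : DifferentiableAt ℝ (fun s => 4 * Real.log s) r :=
      (Real.differentiableAt_log hr0.ne').const_mul 4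
    rw [deriv_fun_add (hdiff r hr) h1,
      deriv_const_mul _ (Real.differentiableAt_log hr0.ne'), Real.deriv_log]
  have main : ∀ r ∈ Set.Ioo a b,
      deriv u r ≤ 0 ∧ 0 ≤ deriv (fun s => u s + 4 * Real.log s) r := by
    intro r hr
    have hr0 : 0 < r := lt_of_le_of_lt ha hr.1
    obtain ⟨h1, h2⟩ := key r hr
    refine ⟨h1, ?_⟩
    rw [hderivg r hr]
    have : 0 ≤ (4 + r * deriv u r) / r := div_nonneg h2 hr0.le
    have heq : (4 + r * deriv u r) / r = deriv u r + 4 * r⁻¹ := by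
      field_simp; ring
    linarith [heq ▸ this]
  refine ⟨main, ?_⟩
  intro c d hac hcd hdb
  have hconv : Convex ℝ (Set.Ioo a b) := convex_Ioo a b
  have hint : interior (Set.Ioo a b) = Set.Ioo a b := isOpen_Ioo.interior_eq
  have hcmem : c ∈ Set.Ioo a b := ⟨hac, hcd.trans hdb⟩
  have hdmem : d ∈ Set.Ioo a b := ⟨hac.trans hcd, hdb⟩
  have hanti : AntitoneOn u (Set.Ioo a b) := by
    apply antitoneOn_of_deriv_nonpos hconv hu.continuousOn
      (fun x hx => ((hdiff x (hint ▸ hx)).differentiableWithinAt))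
    intro x hx
    rw [hint] at hx
    exact (main x hx).1
  have hcontg : ContinuousOn (fun s => u s + 4 * Real.log s) (Set.Ioo a b) := by
    apply hu.continuousOn.add
    exact continuousOn_const.mul (Real.continuousOn_log.mono (fun x hx => by
      have : 0 < x := lt_of_le_of_lt ha hx.1
      simpa using this.ne'))
  have hmono : MonotoneOn (fun s => u s + 4 * Real.log s) (Set.Ioo a b) := by
    apply monotoneOn_of_deriv_nonneg hconv hcontg
      (fun x hx => by
        have hx' := hint ▸ hx
        exact ((hdiff x hx').add
          ((Real.differentiableAt_log (lt_of_le_of_lt ha hx'.1).ne').const_mul 4)).differentiableWithinAt)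
    intro x hx
    rw [hint] at hx
    exact (main x hx).2
  constructor
  · have := hanti hcmem hdmem hcd.le
    linarith
  · have := hmono hcmem hdmem hcd.le
    simp only at this
    linarith
end

section
/- Let 0 < a < b < ∞ and α, β ∈ ℝ. There exists a radially symmetric C² function u on the closed annulus {a ≤ |x| ≤ b} ⊂ ℝ² with both eigenvalues of A^u nonnegative, the determinant of A^u identically zero (i.e., λ(A^u) ∈ ∂Γ₂), u = α on |x| = a, and u = β on |x| = b, if and only if 0 ≤ α - β ≤ 4·ln(b/a). -/
theorem stmt9 (a b α β : ℝ) (ha : 0 < a) (hab : a < b) :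
    (∃ u : ℝ → ℝ, ContDiffOn ℝ 2 u (Set.Icc a b) ∧
      (∀ r ∈ Set.Ioo a b, 0 ≤ lam1 u r ∧ 0 ≤ lam2 u r ∧ lam1 u r * lam2 u r = 0) ∧
      u a = α ∧ u b = β) ↔
    (0 ≤ α - β ∧ α - β ≤ 4 * Real.log (b / a)) := by
  constructor
  · rintro ⟨u, hu, hcond, hua, hub⟩
    have hdiff : ∀ r ∈ Set.Ioo a b, DifferentiableAt ℝ u r := by
      intro r hr
      exact (hu.contDiffAt (Icc_mem_nhds hr.1 hr.2)).differentiableAt two_ne_zero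
    have key : ∀ r ∈ Set.Ioo a b, deriv u r ≤ 0 ∧ 0 ≤ 4 + r * deriv u r := by
      intro r hr
      obtain ⟨-, h2, -⟩ := hcond r hr
      have hr0 : 0 < r := ha.trans hr.1
      have hE : 0 < 4 * Real.exp (u r) * r := by positivity
      set d := deriv u r with hd
      have hprod : d * (4 + r * d) ≤ 0 := by
        unfold lam2 at h2
        rw [show -(1 / (4 * Real.exp (u r) * r)) * deriv u r * (4 + r * deriv u r)
            = (1 / (4 * Real.exp (u r) * r)) * (-(d * (4 + r * d))) from by rw [← hd]; ring] at h2
        by_contra hc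
        push_neg at hc
        have : (1 / (4 * Real.exp (u r) * r)) * (-(d * (4 + r * d))) < 0 :=
          mul_neg_of_pos_of_neg (by positivity) (by linarith)
        linarith
      constructor
      · by_contra hc
        push_neg at hc
        have h4 : 0 < 4 + r * d := by nlinarith [mul_pos hr0 hc]
        have := mul_pos hc h4
        linarith
      · by_contra hc
        push_neg at hc
        have hdn : d < 0 := by
          by_contra hdc
          push_neg at hdc
          nlinarith [mul_nonneg hr0.le hdc]
        have := mul_pos (neg_pos.mpr hdn) (neg_pos.mpr hc)
        nlinarith
    have hanti : AntitoneOn u (Set.Icc a b) := by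
      apply antitoneOn_of_deriv_nonpos (convex_Icc a b) hu.continuousOn
      · intro r hr
        rw [interior_Icc] at hr
        exact ((hdiff r hr).differentiableWithinAt)
      · intro r hr
        rw [interior_Icc] at hr
        exact (key r hr).1
    have h1 : 0 ≤ α - β := by
      have := hanti (Set.left_mem_Icc.mpr hab.le) (Set.right_mem_Icc.mpr hab.le) hab.le
      rw [hua, hub] at this
      linarith
    refine ⟨h1, ?_⟩
    set g : ℝ → ℝ := fun r => u r + 4 * Real.log r with hg
    have hsub : Set.Icc a b ⊆ {(0:ℝ)}ᶜ := by
      intro x hx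
      exact (ne_of_gt (lt_of_lt_of_le ha hx.1))
    have hgd : ∀ r ∈ Set.Ioo a b, HasDerivAt g (deriv u r + 4 * r⁻¹) r := by
      intro r hr
      have hr0 : 0 < r := ha.trans hr.1
      exact ((hdiff r hr).hasDerivAt).add ((Real.hasDerivAt_log (ne_of_gt hr0)).const_mul 4)
    have hmono : MonotoneOn g (Set.Icc a b) := by
      apply monotoneOn_of_deriv_nonneg (convex_Icc a b)
      · exact hu.continuousOn.add (continuousOn_const.mul (Real.continuousOn_log.mono hsub))
      · intro r hr
        rw [interior_Icc] at hr
        exact (hgd r hr).differentiableAt.differentiableWithinAt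
      · intro r hr
        rw [interior_Icc] at hr
        have hr0 : 0 < r := ha.trans hr.1
        rw [(hgd r hr).deriv]
        have h2 := (key r hr).2
        have hh : 0 ≤ (4 + r * deriv u r) * r⁻¹ :=
          mul_nonneg h2 (inv_nonneg.mpr hr0.le)
        have he : (4 + r * deriv u r) * r⁻¹ = 4 * r⁻¹ + deriv u r := by
          field_simp
        linarith [he ▸ hh]
    have := hmono (Set.left_mem_Icc.mpr hab.le) (Set.right_mem_Icc.mpr hab.le) hab.le
    simp only [hg] at this
    rw [hua, hub] at this
    rw [Real.log_div (by linarith) (by linarith)]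
    linarith
  · rintro ⟨h1, h2⟩
    rcases eq_or_lt_of_le h1 with heq | hlt
    · -- α = β : constant function
      refine ⟨fun _ => α, contDiffOn_const, ?_, rfl, by linarith⟩
      intro r hr
      have hd : deriv (fun _ : ℝ => α) = fun _ => 0 := by
        funext x; exact deriv_const x α
      have h1' : lam1 (fun _ => α) r = 0 := by
        simp [lam1, hd]
      have h2' : lam2 (fun _ => α) r = 0 := by
        simp [lam2, hd]
      rw [h1', h2']
      norm_num
    · -- 0 < α - β
      set t := Real.exp ((α - β) / 4) with htdef
      have ht0 : 0 < t := Real.exp_pos _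
      have ht1 : 1 < t := by
        rw [htdef]
        have : (0:ℝ) < (α - β) / 4 := by linarith
        calc (1:ℝ) = Real.exp 0 := by simp
          _ < Real.exp ((α - β)/4) := Real.exp_lt_exp.mpr this
      have htb : t * a ≤ b := by
        have : t ≤ b / a := by
          rw [htdef]
          calc Real.exp ((α - β)/4) ≤ Real.exp (Real.log (b/a)) := by
                apply Real.exp_le_exp.mpr; linarith
            _ = b / a := Real.exp_log (div_pos (ha.trans hab) ha)
        calc t * a ≤ (b / a) * a := by nlinarith
          _ = b := by field_simp
      set k : ℝ := (b - t * a) / (t - 1) with hkdef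
      have hk : 0 ≤ k := div_nonneg (by linarith) (by linarith)
      have hak : 0 < a + k := by linarith
      have htne : t - 1 ≠ 0 := ne_of_gt (by linarith)
      have hbtk : b + k = t * (a + k) := by
        rw [hkdef]
        field_simp
        ring
      set u : ℝ → ℝ := fun s => α + 4 * Real.log (a + k) - 4 * Real.log (s + k) with hudef
      -- derivative of u on {s | 0 < s + k}
      have hU : ∀ s : ℝ, 0 < s + k → HasDerivAt u (-4 * (s + k)⁻¹) s := by
        intro s hs
        have h1' : HasDerivAt (fun x : ℝ => x + k) 1 s := (hasDerivAt_id s).add_const k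
        have h2' : HasDerivAt (fun x : ℝ => Real.log (x + k)) ((s + k)⁻¹ * 1) s :=
          by have := (Real.hasDerivAt_log (ne_of_gt hs)).comp s h1'; exact this
        have h3' : HasDerivAt u (-(4 * ((s + k)⁻¹ * 1))) s :=
          (h2'.const_mul 4).const_sub (α + 4 * Real.log (a + k))
        convert h3' using 1
        ring
      have hderiv : ∀ s : ℝ, 0 < s + k → deriv u s = -4 * (s + k)⁻¹ := by
        intro s hs
        exact (hU s hs).deriv
      refine ⟨u, ?_, ?_, ?_, ?_⟩
      · -- smoothness
        intro r hr
        apply ContDiffAt.contDiffWithinAt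
        have hrk : 0 < r + k := by
          have := hr.1
          linarith
        have hlog : ContDiffAt ℝ 2 (fun x : ℝ => Real.log (x + k)) r := by
          have : ContDiffAt ℝ 2 Real.log (r + k) := Real.contDiffAt_log.mpr (ne_of_gt hrk)
          exact this.comp r (contDiffAt_id.add contDiffAt_const)
        exact contDiffAt_const.sub (contDiffAt_const.mul hlog)
      · intro r hr
        have hr0 : 0 < r := ha.trans hr.1
        have hrk : 0 < r + k := by linarith
        have hd1 : deriv u r = -4 * (r + k)⁻¹ := hderiv r hrk
        have hd2 : deriv (deriv u) r = 4 / (r + k) ^ 2 := by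
          have hev : deriv u =ᶠ[nhds r] (fun s => -4 * (s + k)⁻¹) := by
            filter_upwards [eventually_gt_nhds (show -k < r by linarith)] with s hs
            exact hderiv s (by linarith)
          rw [hev.deriv_eq]
          have h1' : HasDerivAt (fun x : ℝ => x + k) 1 r := (hasDerivAt_id r).add_const k
          have h2' : HasDerivAt (fun x : ℝ => (x + k)⁻¹) (-(1 / (r + k) ^ 2)) r := by
            have : HasDerivAt (fun x : ℝ => (x + k)⁻¹) (-1 / (r + k) ^ 2) r := h1'.inv (ne_of_gt hrk)
            convert this using 1
            ring
          have h3' := h2'.const_mul (-4 : ℝ)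
          rw [h3'.deriv]
          ring
        have hl1 : lam1 u r = 0 := by
          rw [lam1, hd1, hd2]
          have : (-4 * (r + k)⁻¹) ^ 2 - 4 * (4 / (r + k) ^ 2) = 0 := by
            field_simp
            norm_num
          rw [this, mul_zero]
        have hl2 : lam2 u r = 16 * k / (4 * Real.exp (u r) * r * (r + k) ^ 2) := by
          rw [lam2, hd1]
          have hE : (0:ℝ) < 4 * Real.exp (u r) * r := by positivity
          field_simp
          ring
        refine ⟨le_of_eq hl1.symm, ?_, by rw [hl1, zero_mul]⟩
        rw [hl2]
        apply div_nonneg (by linarith) (by positivity)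
      · simp [hudef]
      · -- u b = β
        have hlb : Real.log (b + k) = Real.log t + Real.log (a + k) := by
          rw [hbtk, Real.log_mul (ne_of_gt ht0) (ne_of_gt hak)]
        have hlt : Real.log t = (α - β) / 4 := Real.log_exp _
        simp only [hudef]
        rw [hlb, hlt]
        ring
end
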